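/- Consider the linear demand model with parameters α, β ∈ ℝ and φ_i ∈ ℝ^i for i = 1,…,n, and horizon H ≥ n. For a price vector p = (p_1,…,p_H) ∈ ℝ^H, let s_h = [p_{max(1,h−n)},…,p_{h−2},p_{h−1}]ᵀ for 2 ≤ h ≤ H, and define the episode value V_p = Σ_{h=1}^H p_h·d_h where d_1 = α + β·p_1, d_h = α + β·p_h + φ_{h−1}ᵀ·s_h for 2 ≤ h ≤ n, and d_h = α + β·p_h + φ_nᵀ·s_h for n+1 ≤ h ≤ H. Define the H×H matrix M_θ by: M_θ[h,h] = β for 1 ≤ h ≤ H; M_θ[max(h−n,1):h−1, h] = (1/2)·φ_{min(h−1,n)} and M_θ[h, max(h−n,1):h−1] = (1/2)·φ_{min(h−1,n)}ᵀ for 2 ≤ h ≤ H; and all other entries zero. Then V_p = pᵀ·M_θ·p + α·1ᵀ·p, where p is treated as a column vector in ℝ^H and 1 is the all-ones vector. -/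

import Mathlib

/-!
Statement 13: In the linear demand model with reference effects, the episode value
`V_p = Σ_h p_h · d_h` equals the quadratic form `pᵀ M_θ p + α 1ᵀ p`.

We index periods by `0,…,H-1` (the paper's period `h` is our `h-1`).  The state at
(0-indexed) period `h` is the list `[p_{max(0,h-n)},…,p_{h-1}]`, whose length is
`min h n`; the coefficient vector applied to a state of length `l` is `φ_l ∈ ℝ^l`
(the paper's `φ_{min(h-1,n)}`).  The parameters are given as `φ : (i : ℕ) → Fin i → ℝ`;
only `φ_1,…,φ_n` are ever used.
-/

noncomputable section
open Matrix

/-- The `n`-step price history (state) before (0-indexed) period `h`: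
`s_h = [p_{max(0,h-n)}, …, p_{h-1}]`. -/
def stateList (n : ℕ) (p : ℕ → ℝ) (h : ℕ) : List ℝ :=
  ((List.range h).drop (h - n)).map p

/-- Expected demand in the linear model: `d = α + β·p + φ_{l}ᵀ s` where `l` is the
length of the state `s` (so `l = min(h-1,n)` at the paper's period `h`). -/
def linDemand (a b : ℝ) (φ : (i : ℕ) → Fin i → ℝ) (p : ℝ) (s : List ℝ) : ℝ :=
  a + b * p + ∑ j : Fin s.length, φ s.length j * s.get j

/-- Episode value of the price sequence `p` over horizon `H` with `n`-step memory:
`V_p = Σ_{h=1}^H p_h · d_h`. -/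
def linValue (H n : ℕ) (a b : ℝ) (φ : (i : ℕ) → Fin i → ℝ) (p : ℕ → ℝ) : ℝ :=
  ∑ h ∈ Finset.range H, p h * linDemand a b φ (p h) (stateList n p h)

/-- The `H × H` matrix `M_θ`: diagonal entries `β`; for a column `h` (0-indexed, the
paper's column `h+1`), the entries in rows `max(h-n,0),…,h-1` are `(1/2)·φ_{min(h,n)}`,
symmetrically in rows; all other entries vanish. -/
def linM (n H : ℕ) (b : ℝ) (φ : (i : ℕ) → Fin i → ℝ) : Matrix (Fin H) (Fin H) ℝ :=
  fun g h =>
    if g = h then b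
    else if hc : (g : ℕ) < h ∧ (h : ℕ) - g ≤ n then
      (1 / 2) * φ (min (h : ℕ) n) ⟨(g : ℕ) - ((h : ℕ) - min (h : ℕ) n), by omega⟩
    else if hc' : (h : ℕ) < g ∧ (g : ℕ) - h ≤ n then
      (1 / 2) * φ (min (g : ℕ) n) ⟨(h : ℕ) - ((g : ℕ) - min (g : ℕ) n), by omega⟩
    else 0

/-- totalized φ -/
def phiExt (φ : (i : ℕ) → Fin i → ℝ) (l j : ℕ) : ℝ :=
  if hj : j < l then φ l ⟨j, hj⟩ else 0

lemma phiExt_mk (φ : (i : ℕ) → Fin i → ℝ) {l j : ℕ} (hj : j < l) :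
    φ l ⟨j, hj⟩ = phiExt φ l j := by
  unfold phiExt; rw [dif_pos hj]

/-- the off-diagonal cross term -/
def crossT (n : ℕ) {H : ℕ} (φ : (i : ℕ) → Fin i → ℝ) (p : Fin H → ℝ) (g h : Fin H) : ℝ :=
  if (g : ℕ) < (h : ℕ) ∧ (h : ℕ) - (g : ℕ) ≤ n then
    phiExt φ (min (h : ℕ) n) ((g : ℕ) - ((h : ℕ) - min (h : ℕ) n)) * (p g * p h) else 0

lemma stateList_length (n : ℕ) (q : ℕ → ℝ) (h : ℕ) :
    (stateList n q h).length = min h n := by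
  simp [stateList]; omega

lemma stateList_get (n : ℕ) (q : ℕ → ℝ) (h : ℕ) (j : Fin (stateList n q h).length) :
    (stateList n q h).get j = q (h - n + j) := by
  have hj : (j : ℕ) < min h n := by
    have h1 := j.isLt; have h2 := stateList_length n q h; omega
  rw [List.get_eq_getElem]
  simp only [stateList, List.get_eq_getElem, List.getElem_map, List.getElem_drop,
    List.getElem_range]

lemma stateList_sum (n : ℕ) (φ : (i : ℕ) → Fin i → ℝ) (q : ℕ → ℝ) (h : ℕ) :
    (∑ j : Fin (stateList n q h).length,
        φ (stateList n q h).length j * (stateList n q h).get j)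
      = ∑ j ∈ Finset.range (min h n), phiExt φ (min h n) j * q (h - n + j) := by
  have e : (∑ j : Fin (stateList n q h).length,
        φ (stateList n q h).length j * (stateList n q h).get j)
      = ∑ j : Fin (stateList n q h).length,
        phiExt φ (stateList n q h).length j * q (h - n + j) := by
    refine Finset.sum_congr rfl fun j _ => ?_
    rw [stateList_get, phiExt_mk φ j.isLt]
  rw [e, Fin.sum_univ_eq_sum_range
      (fun j => phiExt φ (stateList n q h).length j * q (h - n + j)), stateList_length]

lemma inner_eq (n : ℕ) {H : ℕ} (φ : (i : ℕ) → Fin i → ℝ) (p : Fin H → ℝ) (h : Fin H) :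
    (∑ j ∈ Finset.range (min (h : ℕ) n), phiExt φ (min (h : ℕ) n) j
        * (fun k => if hk : k < H then p ⟨k, hk⟩ else 0) ((h : ℕ) - n + j))
      = ∑ g : Fin H, if (g : ℕ) < (h : ℕ) ∧ (h : ℕ) - (g : ℕ) ≤ n then
          phiExt φ (min (h : ℕ) n) ((g : ℕ) - ((h : ℕ) - min (h : ℕ) n)) * p g else 0 := by
  have hrhs : (∑ g : Fin H, if (g : ℕ) < (h : ℕ) ∧ (h : ℕ) - (g : ℕ) ≤ n then
          phiExt φ (min (h : ℕ) n) ((g : ℕ) - ((h : ℕ) - min (h : ℕ) n)) * p g else 0)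
      = ∑ g ∈ Finset.range H, if g < (h : ℕ) ∧ (h : ℕ) - g ≤ n then
          phiExt φ (min (h : ℕ) n) (g - ((h : ℕ) - min (h : ℕ) n))
            * (if hg : g < H then p ⟨g, hg⟩ else 0) else 0 := by
    rw [← Fin.sum_univ_eq_sum_range (fun g => if g < (h : ℕ) ∧ (h : ℕ) - g ≤ n then
          phiExt φ (min (h : ℕ) n) (g - ((h : ℕ) - min (h : ℕ) n))
            * (if hg : g < H then p ⟨g, hg⟩ else 0) else 0)]
    refine Finset.sum_congr rfl fun g _ => ?_
    simp [g.isLt]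
  rw [hrhs]
  have hfilter : (Finset.range H).filter (fun g => g < (h : ℕ) ∧ (h : ℕ) - g ≤ n)
      = Finset.Ico ((h : ℕ) - n) (h : ℕ) := by
    ext g
    simp only [Finset.mem_filter, Finset.mem_range, Finset.mem_Ico]
    have := h.isLt
    omega
  rw [Finset.sum_ite, Finset.sum_const_zero, add_zero, hfilter,
    Finset.sum_Ico_eq_sum_range]
  have hmin : (h : ℕ) - ((h : ℕ) - n) = min (h : ℕ) n := by omega
  rw [hmin]
  refine Finset.sum_congr rfl fun j hj => ?_
  rw [Finset.mem_range] at hj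
  congr 2
  omega

lemma linM_decomp (n : ℕ) {H : ℕ} (b : ℝ) (φ : (i : ℕ) → Fin i → ℝ) (p : Fin H → ℝ)
    (g h : Fin H) :
    p g * (linM n H b φ g h * p h)
      = (if g = h then b * (p g * p h) else 0)
        + ((1 / 2) * crossT n φ p g h + (1 / 2) * crossT n φ p h g) := by
  unfold crossT
  by_cases h1 : g = h
  · subst h1
    simp [linM]
    ring
  · have h1' : (g : ℕ) ≠ (h : ℕ) := fun e => h1 (Fin.ext e)
    by_cases h2 : (g : ℕ) < (h : ℕ) ∧ (h : ℕ) - (g : ℕ) ≤ n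
    · have h3 : ¬((h : ℕ) < (g : ℕ) ∧ (g : ℕ) - (h : ℕ) ≤ n) := by omega
      rw [if_neg h1, if_pos h2, if_neg h3, linM, if_neg h1, dif_pos h2,
        phiExt_mk φ (show (g : ℕ) - ((h : ℕ) - min (h : ℕ) n) < min (h : ℕ) n by omega)]
      ring
    · by_cases h3 : (h : ℕ) < (g : ℕ) ∧ (g : ℕ) - (h : ℕ) ≤ n
      · rw [if_neg h1, if_neg h2, if_pos h3, linM, if_neg h1, dif_neg h2, dif_pos h3,
          phiExt_mk φ (show (h : ℕ) - ((g : ℕ) - min (g : ℕ) n) < min (g : ℕ) n by omega)]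
        ring
      · rw [if_neg h1, if_neg h2, if_neg h3, linM, if_neg h1, dif_neg h2, dif_neg h3]
        ring

/-- For the linear demand model with parameters `α, β, φ_1,…,φ_n`
and horizon `H ≥ n`, the episode value of any price vector `p ∈ ℝ^H` satisfies
`V_p = pᵀ M_θ p + α·1ᵀp`. -/
theorem linValue_eq_quadratic_form
    (n H : ℕ) (hHn : n ≤ H) (a b : ℝ) (φ : (i : ℕ) → Fin i → ℝ) (p : Fin H → ℝ) :
    linValue H n a b φ (fun h => if hh : h < H then p ⟨h, hh⟩ else 0)
      = p ⬝ᵥ (linM n H b φ).mulVec p + a * (∑ h, p h) := by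
  classical
  set q : ℕ → ℝ := fun h => if hh : h < H then p ⟨h, hh⟩ else 0 with hq
  -- RHS rewriting
  have hRHS : p ⬝ᵥ (linM n H b φ).mulVec p
      = ∑ g : Fin H, ∑ h : Fin H, p g * (linM n H b φ g h * p h) := by
    simp [dotProduct, mulVec, Finset.mul_sum]
  have hT1 : (∑ g : Fin H, ∑ h : Fin H, (if g = h then b * (p g * p h) else 0))
      = ∑ h : Fin H, b * (p h * p h) := by
    simp [Finset.sum_ite_eq]
  have hswap : (∑ g : Fin H, ∑ h : Fin H, crossT n φ p h g)
      = ∑ g : Fin H, ∑ h : Fin H, crossT n φ p g h := by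
    exact Finset.sum_comm
  have hdecomp : (∑ g : Fin H, ∑ h : Fin H, p g * (linM n H b φ g h * p h))
      = (∑ h : Fin H, b * (p h * p h)) + ∑ g : Fin H, ∑ h : Fin H, crossT n φ p g h := by
    simp only [linM_decomp n b φ p, Finset.sum_add_distrib]
    rw [hT1]
    simp only [← Finset.mul_sum]
    rw [hswap]
    ring
  -- LHS rewriting
  rw [linValue, ← Fin.sum_univ_eq_sum_range
    (fun h => q h * linDemand a b φ (q h) (stateList n q h))]
  have hterm : ∀ h : Fin H, q (h : ℕ) * linDemand a b φ (q (h : ℕ)) (stateList n q (h : ℕ))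
      = a * p h + b * (p h * p h) + ∑ g : Fin H, crossT n φ p g h := by
    intro h
    have hqh : q (h : ℕ) = p h := by simp [hq, h.isLt]
    rw [linDemand, stateList_sum, hqh, hq, inner_eq n φ p h]
    rw [mul_add, mul_add, Finset.mul_sum]
    congr 1
    · ring
    refine Finset.sum_congr rfl fun g _ => ?_
    unfold crossT
    by_cases hc : (g : ℕ) < (h : ℕ) ∧ (h : ℕ) - (g : ℕ) ≤ n
    · rw [if_pos hc, if_pos hc]; ring
    · rw [if_neg hc, if_neg hc]; ring
  simp only [hterm]
  rw [hRHS, hdecomp, Finset.sum_add_distrib, Finset.sum_add_distrib, ← Finset.mul_sum,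
    Finset.sum_comm (f := fun h g => crossT n φ p g h)]
  ring

end
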